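/- Suppose q(n) is reachable in a one-dimensional BVASS with state set Q and n > 2^{|Q|}. Then there exists a reachability tree T for some q(n') with n' ≥ n that contains a decreasing node v at depth at most |Q|. -/

import Mathlib

/-- A one-dimensional branching vector addition system with states:
branching transitions `br`, unary transitions `un` with update in `{-1,0,1}`,
and final states `final`. -/
structure BVASS1 (Q : Type) where
  br : Q → Q → Q → Prop
  un : Q → ℤ → Q → Prop
  un_small : ∀ q z p, un q z p → z = -1 ∨ z = 0 ∨ z = 1
  final : Q → Prop

/-- A finite binary tree with nodes given by a prefix-closed set of words over
`Bool` and labels in `Q × ℕ`. -/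
structure BTree (Q : Type) where
  dom : Set (List Bool)
  label : List Bool → Q × ℕ
  finite : dom.Finite
  root_mem : ([] : List Bool) ∈ dom
  prefixClosed : ∀ ⦃u v : List Bool⦄, v ∈ dom → u <+: v → u ∈ dom

/-- `u` is a strict ancestor of `v`. -/
def StrictPrefix (u v : List Bool) : Prop := u <+: v ∧ u ≠ v

/-- `u` is the lowest common ancestor of `v` and `w`. -/
def IsLCA (u v w : List Bool) : Prop :=
  u <+: v ∧ u <+: w ∧ ∀ u', u' <+: v → u' <+: w → u' <+: u

namespace BTree

variable {Q : Type}

def state (T : BTree Q) (u : List Bool) : Q := (T.label u).1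

def counter (T : BTree Q) (u : List Bool) : ℕ := (T.label u).2

def IsLeaf (T : BTree Q) (u : List Bool) : Prop :=
  u ∈ T.dom ∧ ∀ b : Bool, u ++ [b] ∉ T.dom

/-- The subtree of `T` rooted at node `u`. -/
def subtree (T : BTree Q) (u : List Bool) (hu : u ∈ T.dom) : BTree Q where
  dom := {x | u ++ x ∈ T.dom}
  label := fun x => T.label (u ++ x)
  finite := Set.Finite.preimage
    (Function.Injective.injOn fun a b h => by simpa using h) T.finite
  root_mem := by simpa using hu
  prefixClosed := by
    rintro a c hc ⟨t, rfl⟩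
    exact T.prefixClosed hc ⟨t, by simp⟩

/-- All counter values in the tree are at most `j`. -/
def Bounded (T : BTree Q) (j : ℕ) : Prop := ∀ u ∈ T.dom, T.counter u ≤ j

/-- All counter values, except possibly the root's, are at most `j`. -/
def AlmostBounded (T : BTree Q) (j : ℕ) : Prop :=
  ∀ u ∈ T.dom, u ≠ [] → T.counter u ≤ j

/-- A node is increasing if it has a strict ancestor with the same state
and a strictly smaller counter value. -/
def Increasing (T : BTree Q) (v : List Bool) : Prop :=
  ∃ u ∈ T.dom, StrictPrefix u v ∧ T.state u = T.state v ∧ T.counter u < T.counter v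

/-- `u` is the anchor of the increasing node `v`: the maximal strict ancestor of `v`
with the same state and strictly smaller counter value. -/
def IsAnchorOf (T : BTree Q) (u v : List Bool) : Prop :=
  u ∈ T.dom ∧ StrictPrefix u v ∧ T.state u = T.state v ∧ T.counter u < T.counter v ∧
    ∀ u' ∈ T.dom, StrictPrefix u' v → T.state u' = T.state v →
      T.counter u' < T.counter v → u' <+: u

/-- The tree is exclusive: the least common ancestor of any two distinct increasing
leaves is a strict ancestor of at least one of their anchors. -/
def Exclusive (T : BTree Q) : Prop :=
  ∀ v w, T.IsLeaf v → T.IsLeaf w → T.Increasing v → T.Increasing w → v ≠ w →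
    ∀ a b l, T.IsAnchorOf a v → T.IsAnchorOf b w → IsLCA l v w →
      StrictPrefix l a ∨ StrictPrefix l b

end BTree

namespace BVASS1

variable {Q : Type}

/-- `T` is a partial reachability tree of `B`: at every inner node either a
branching transition splits the counter over two children, or a unary transition
changes the counter by `z` along a single-child edge. -/
def IsPRT (B : BVASS1 Q) (T : BTree Q) : Prop :=
  ∀ u ∈ T.dom, ¬ T.IsLeaf u →
    ((u ++ [false] ∈ T.dom ∧ u ++ [true] ∈ T.dom ∧
        B.br (T.state u) (T.state (u ++ [false])) (T.state (u ++ [true])) ∧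
        T.counter u = T.counter (u ++ [false]) + T.counter (u ++ [true])) ∨
     (u ++ [false] ∈ T.dom ∧ u ++ [true] ∉ T.dom ∧
        ∃ z : ℤ, B.un (T.state u) z (T.state (u ++ [false])) ∧
          (T.counter (u ++ [false]) : ℤ) = (T.counter u : ℤ) + z))

/-- `T` is a (full) reachability tree of `B`: a partial reachability tree all of
whose leaves are accepting (final state, counter zero). -/
def IsRT (B : BVASS1 Q) (T : BTree Q) : Prop :=
  B.IsPRT T ∧ ∀ u, T.IsLeaf u → B.final (T.state u) ∧ T.counter u = 0

/-- The configuration `q(n)` is reachable. -/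
def Reachable (B : BVASS1 Q) (q : Q) (n : ℕ) : Prop :=
  ∃ T : BTree Q, B.IsRT T ∧ T.label [] = (q, n)

/-- The reachability set of a control state. -/
def reachSet (B : BVASS1 Q) (q : Q) : Set ℕ := {n | B.Reachable q n}

/-- The configuration `q(n)` is coverable. -/
def Coverable (B : BVASS1 Q) (q : Q) (n : ℕ) : Prop :=
  ∃ m, n ≤ m ∧ B.Reachable q m

/-- `T` is expandable: exclusive, every leaf is accepting or increasing, and every
increasing leaf with its anchor induces a positive residue-reachability instance. -/
def Expandable (B : BVASS1 Q) (T : BTree Q) : Prop :=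
  T.Exclusive ∧
  (∀ v, T.IsLeaf v → (B.final (T.state v) ∧ T.counter v = 0) ∨ T.Increasing v) ∧
  (∀ v u, T.IsLeaf v → T.IsAnchorOf u v →
    ∃ l, B.Reachable (T.state v) l ∧ T.counter v ≤ l ∧
      l ≡ T.counter v [MOD T.counter v - T.counter u])

end BVASS1


namespace BTree

variable {Q : Type}

theorem length_lt_of_strict_prefix {x u : List Bool} (h : x <+: u) (hne : x ≠ u) :
    x.length < u.length := by
  rcases lt_or_ge x.length u.length with h' | h'
  · exact h'
  · exact absurd (h.eq_of_length_le h') hne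

theorem prefix_snoc {x u : List Bool} (b : Bool) (hxu : x <+: u) (hne : x ≠ u)
    (h : u <+: x ++ [b]) : u = x ++ [b] := by
  refine h.eq_of_length_le ?_
  have := length_lt_of_strict_prefix hxu hne
  simpa using this

theorem prefix_same_length {x y u : List Bool} (hx : x <+: u) (hy : y <+: u)
    (h : x.length = y.length) : x = y := by
  rcases List.prefix_or_prefix_of_prefix hx hy with h' | h'
  · exact h'.eq_of_length_le (le_of_eq h.symm)
  · exact (h'.eq_of_length_le (le_of_eq h)).symm

def graft (T : BTree Q) (u w : List Bool) (δ : ℕ) (hu : u ∈ T.dom)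
    (hv : u ++ w ∈ T.dom) : BTree Q where
  dom := {x | if u <+: x then u ++ w ++ x.drop u.length ∈ T.dom else x ∈ T.dom}
  label := fun x =>
    if u <+: x then T.label (u ++ w ++ x.drop u.length)
    else if x <+: u then (T.state x, T.counter x + δ) else T.label x
  finite := by
    apply Set.Finite.subset
      ((T.finite.image (fun y => u ++ y.drop (u.length + w.length))).union T.finite)
    intro x hx
    simp only [Set.mem_setOf_eq] at hx
    by_cases h : u <+: x
    · rw [if_pos h] at hx
      obtain ⟨t, rfl⟩ := h
      rw [List.drop_left] at hx
      left
      refine ⟨u ++ w ++ t, hx, ?_⟩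
      show u ++ (u ++ w ++ t).drop (u.length + w.length) = u ++ t
      rw [show u ++ w ++ t = (u ++ w) ++ t from by rw [List.append_assoc],
        show u.length + w.length = (u ++ w).length from List.length_append.symm,
        List.drop_left]
    · rw [if_neg h] at hx; exact Or.inr hx
  root_mem := by
    simp only [Set.mem_setOf_eq]
    by_cases h : u <+: ([] : List Bool)
    · rw [if_pos h]
      have hu0 : u = [] := List.prefix_nil.mp h
      subst hu0; simpa using hv
    · rw [if_neg h]; exact T.root_mem
  prefixClosed := by
    intro a c hc hac
    simp only [Set.mem_setOf_eq] at *
    by_cases hcu : u <+: c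
    · rw [if_pos hcu] at hc
      by_cases hau : u <+: a
      · rw [if_pos hau]
        obtain ⟨s, rfl⟩ := hau
        obtain ⟨t, rfl⟩ := hcu
        rw [List.drop_left] at *
        have hst : s <+: t := (List.prefix_append_right_inj u).mp hac
        exact T.prefixClosed hc ((List.prefix_append_right_inj (u ++ w)).mpr hst)
      · rw [if_neg hau]
        have hau' : a <+: u := by
          rcases List.prefix_or_prefix_of_prefix hac hcu with h | h
          · exact h
          · exact absurd h hau
        exact T.prefixClosed hu hau'
    · rw [if_neg hcu] at hc
      have hau : ¬ u <+: a := fun h => hcu (h.trans hac)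
      rw [if_neg hau]
      exact T.prefixClosed hc hac

variable {T : BTree Q} {u w : List Bool} {δ : ℕ} {hu : u ∈ T.dom} {hv : u ++ w ∈ T.dom}

theorem graft_dom_append (s : List Bool) :
    u ++ s ∈ (T.graft u w δ hu hv).dom ↔ u ++ (w ++ s) ∈ T.dom := by
  show (if u <+: u ++ s then _ ∈ T.dom else _) ↔ _
  rw [if_pos (List.prefix_append u s), List.drop_left, List.append_assoc]

theorem graft_dom_not {x : List Bool} (h : ¬ u <+: x) :
    x ∈ (T.graft u w δ hu hv).dom ↔ x ∈ T.dom := by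
  show (if u <+: x then _ ∈ T.dom else _) ↔ _
  rw [if_neg h]

theorem graft_label_append (s : List Bool) :
    (T.graft u w δ hu hv).label (u ++ s) = T.label (u ++ (w ++ s)) := by
  show (if u <+: u ++ s then _ else _) = _
  rw [if_pos (List.prefix_append u s), List.drop_left, List.append_assoc]

theorem graft_label_not {x : List Bool} (h1 : ¬ u <+: x) (h2 : ¬ x <+: u) :
    (T.graft u w δ hu hv).label x = T.label x := by
  show (if u <+: x then _ else _) = _
  rw [if_neg h1, if_neg h2]

theorem graft_label_anc (hst : T.state u = T.state (u ++ w))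
    (hct : T.counter u + δ = T.counter (u ++ w))
    {x : List Bool} (h : x <+: u) :
    (T.graft u w δ hu hv).label x = (T.state x, T.counter x + δ) := by
  by_cases hxu : x = u
  · have h0 : (T.graft u w δ hu hv).label (u ++ []) = T.label (u ++ (w ++ [])) :=
      graft_label_append []
    simp only [List.append_nil] at h0
    rw [hxu, h0, hst, hct]
    exact rfl
  · have h1 : ¬ u <+: x := fun h' => hxu (h'.eq_of_length_le h.length_le).symm
    show (if u <+: x then _ else _) = _
    rw [if_neg h1, if_pos h]

end BTree

namespace BVASS1

variable {Q : Type}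

theorem collapse {B : BVASS1 Q} {T : BTree Q} (hRT : B.IsRT T)
    {u w : List Bool} (hw : w ≠ []) (hu : u ∈ T.dom) (hv : u ++ w ∈ T.dom)
    (hst : T.state u = T.state (u ++ w)) (hct : T.counter u ≤ T.counter (u ++ w)) :
    ∃ T' : BTree Q, B.IsRT T' ∧ T'.dom.ncard < T.dom.ncard ∧
      T'.label [] = ((T.label []).1,
        (T.label []).2 + (T.counter (u ++ w) - T.counter u)) := by
  classical
  set δ := T.counter (u ++ w) - T.counter u with hδ
  have hct' : T.counter u + δ = T.counter (u ++ w) := by omega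
  set T' := T.graft u w δ hu hv with hT'def
  have hlabanc : ∀ {x : List Bool}, x <+: u →
      T'.label x = (T.state x, T.counter x + δ) :=
    fun h => BTree.graft_label_anc hst hct' h
  -- membership of children of strict ancestors of u
  have hmemB : ∀ x, x <+: u → x ≠ u → ∀ b : Bool,
      (x ++ [b] ∈ T'.dom ↔ x ++ [b] ∈ T.dom) := by
    intro x hxu hne b
    by_cases hp : x ++ [b] <+: u
    · constructor
      · intro _; exact T.prefixClosed hu hp
      · intro _
        by_cases hux : u <+: x ++ [b]
        · have he : u = x ++ [b] := BTree.prefix_snoc b hxu hne hux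
          rw [← he]
          have h0 : u ++ [] ∈ T'.dom ↔ u ++ (w ++ []) ∈ T.dom := BTree.graft_dom_append []
          simp only [List.append_nil] at h0
          exact h0.mpr hv
        · exact (BTree.graft_dom_not hux).mpr (T.prefixClosed hu hp)
    · have hux : ¬ u <+: x ++ [b] := fun h =>
        hp (BTree.prefix_snoc b hxu hne h ▸ List.prefix_refl _)
      exact BTree.graft_dom_not hux
  -- labels of children of strict ancestors of u
  have hlabB : ∀ x, x <+: u → x ≠ u → ∀ b : Bool,
      (T'.label (x ++ [b]) = (T.state (x ++ [b]), T.counter (x ++ [b]) + δ)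
        ∧ x ++ [b] <+: u) ∨
      (T'.label (x ++ [b]) = T.label (x ++ [b]) ∧ ¬ x ++ [b] <+: u) := by
    intro x hxu hne b
    by_cases hp : x ++ [b] <+: u
    · exact Or.inl ⟨hlabanc hp, hp⟩
    · have hux : ¬ u <+: x ++ [b] := fun h =>
        hp (BTree.prefix_snoc b hxu hne h ▸ List.prefix_refl _)
      exact Or.inr ⟨BTree.graft_label_not hux hp, hp⟩
  -- for strict ancestors x of u with u = x ++ b0 :: r, the child toward u
  have toward : ∀ x, x <+: u → x ≠ u → ∃ b0 : Bool, x ++ [b0] <+: u ∧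
      ∀ b : Bool, b ≠ b0 → ¬ x ++ [b] <+: u := by
    intro x hxu hne
    obtain ⟨r, hr⟩ := hxu
    match r, hr with
    | [], hr => exact absurd (by rw [← hr]; simp) hne
    | b0 :: rt, hr =>
      refine ⟨b0, ⟨rt, by rw [← hr]; simp⟩, ?_⟩
      intro b hb hpb
      have : x ++ [b] = x ++ [b0] := BTree.prefix_same_length hpb ⟨rt, by rw [← hr]; simp⟩ (by simp)
      simp at this; exact hb this
  -- case C helper
  have keyC : ∀ x : List Bool, ¬ u <+: x → ¬ x <+: u → ∀ b : Bool,
      ¬ u <+: x ++ [b] ∧ ¬ x ++ [b] <+: u := by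
    intro x hux hxu b
    constructor
    · intro h
      rcases List.prefix_or_prefix_of_prefix h (List.prefix_append x [b]) with h' | h'
      · exact hux h'
      · exact hxu h' 
    · intro h
      exact hxu ((List.prefix_append x [b]).trans h)
  -- case A transfer helpers
  have hA_mem : ∀ s, (u ++ s ∈ T'.dom ↔ u ++ (w ++ s) ∈ T.dom) :=
    fun s => BTree.graft_dom_append s
  have hA_lab : ∀ s, T'.label (u ++ s) = T.label (u ++ (w ++ s)) :=
    fun s => BTree.graft_label_append s
  refine ⟨T', ⟨?_, ?_⟩, ?_, ?_⟩
  · -- IsPRT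
    intro x hx hnl
    by_cases hux : u <+: x
    · -- case A: x in the grafted subtree
      obtain ⟨t, rfl⟩ := hux
      have hy : u ++ (w ++ t) ∈ T.dom := (hA_mem t).mp hx
      have hmc : ∀ b : Bool, ((u ++ t) ++ [b] ∈ T'.dom ↔ (u ++ (w ++ t)) ++ [b] ∈ T.dom) := by
        intro b
        have := hA_mem (t ++ [b])
        simpa only [List.append_assoc] using this
      have hlc : ∀ b : Bool, T'.label ((u ++ t) ++ [b]) = T.label ((u ++ (w ++ t)) ++ [b]) := by
        intro b
        have := hA_lab (t ++ [b])
        simpa only [List.append_assoc] using this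
      have hyl : ¬ T.IsLeaf (u ++ (w ++ t)) := by
        rintro ⟨_, h2⟩
        exact hnl ⟨hx, fun b hb => h2 b ((hmc b).mp hb)⟩
      have hlx : T'.label (u ++ t) = T.label (u ++ (w ++ t)) := hA_lab t
      have hsx : T'.state (u ++ t) = T.state (u ++ (w ++ t)) := congrArg Prod.fst hlx
      have hcx : T'.counter (u ++ t) = T.counter (u ++ (w ++ t)) := congrArg Prod.snd hlx
      have hsc : ∀ b, T'.state ((u ++ t) ++ [b]) = T.state ((u ++ (w ++ t)) ++ [b]) :=
        fun b => congrArg Prod.fst (hlc b)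
      have hcc : ∀ b, T'.counter ((u ++ t) ++ [b]) = T.counter ((u ++ (w ++ t)) ++ [b]) :=
        fun b => congrArg Prod.snd (hlc b)
      rcases hRT.1 _ hy hyl with ⟨h1, h2, h3, h4⟩ | ⟨h1, h2, z, hz, he⟩
      · left
        refine ⟨(hmc false).mpr h1, (hmc true).mpr h2, ?_, ?_⟩
        · rw [hsx, hsc false, hsc true]; exact h3
        · rw [hcx, hcc false, hcc true]; exact h4
      · right
        refine ⟨(hmc false).mpr h1, fun h => h2 ((hmc true).mp h), z, ?_, ?_⟩
        · rw [hsx, hsc false]; exact hz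
        · rw [hcx, hcc false]; exact he
    · by_cases hxu : x <+: u
      · -- case B: x is a strict ancestor of u
        have hne : x ≠ u := fun he => hux (by rw [he])
        have hxd : x ∈ T.dom := T.prefixClosed hu hxu
        obtain ⟨b0, hb0, hb0u⟩ := toward x hxu hne
        have hxl : ¬ T.IsLeaf x := fun h => h.2 b0 (T.prefixClosed hu hb0)
        have hlx : T'.label x = (T.state x, T.counter x + δ) := hlabanc hxu
        have hsx : T'.state x = T.state x := by simp [BTree.state, hlx]
        have hcx : T'.counter x = T.counter x + δ := by simp [BTree.counter, hlx]
        have hsc : ∀ b, T'.state (x ++ [b]) = T.state (x ++ [b]) := by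
          intro b
          rcases hlabB x hxu hne b with ⟨h, _⟩ | ⟨h, _⟩ <;> simp [BTree.state, h]
        have hcc : ∀ b, T'.counter (x ++ [b]) =
            T.counter (x ++ [b]) + (if x ++ [b] <+: u then δ else 0) := by
          intro b
          rcases hlabB x hxu hne b with ⟨h, hp⟩ | ⟨h, hp⟩
          · rw [if_pos hp]; simp [BTree.counter, h]
          · rw [if_neg hp]; simp [BTree.counter, h]
        rcases hRT.1 x hxd hxl with ⟨h1, h2, h3, h4⟩ | ⟨h1, h2, z, hz, he⟩
        · left
          refine ⟨(hmemB x hxu hne false).mpr h1, (hmemB x hxu hne true).mpr h2, ?_, ?_⟩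
          · rw [hsx, hsc false, hsc true]; exact h3
          · rw [hcx, hcc false, hcc true]
            cases b0
            · rw [if_pos hb0, if_neg (hb0u true (by simp))]
              omega
            · rw [if_neg (hb0u false (by simp)), if_pos hb0]
              omega
        · right
          have hb0f : b0 = false := by
            cases b0
            · rfl
            · exact absurd (T.prefixClosed hu hb0) h2
          subst hb0f
          refine ⟨(hmemB x hxu hne false).mpr h1,
            fun h => h2 ((hmemB x hxu hne true).mp h), z, ?_, ?_⟩
          · rw [hsx, hsc false]; exact hz
          · rw [hcx, hcc false, if_pos hb0]
            push_cast
            omega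
      · -- case C: x is off the path
        have hC : ∀ b, ¬ u <+: x ++ [b] ∧ ¬ x ++ [b] <+: u := keyC x hux hxu
        have hxd : x ∈ T.dom := (BTree.graft_dom_not hux).mp hx
        have hmc : ∀ b : Bool, (x ++ [b] ∈ T'.dom ↔ x ++ [b] ∈ T.dom) :=
          fun b => BTree.graft_dom_not (hC b).1
        have hlx : T'.label x = T.label x := BTree.graft_label_not hux hxu
        have hlc : ∀ b, T'.label (x ++ [b]) = T.label (x ++ [b]) :=
          fun b => BTree.graft_label_not (hC b).1 (hC b).2
        have hsx : T'.state x = T.state x := congrArg Prod.fst hlx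
        have hcx : T'.counter x = T.counter x := congrArg Prod.snd hlx
        have hsc : ∀ b, T'.state (x ++ [b]) = T.state (x ++ [b]) :=
          fun b => congrArg Prod.fst (hlc b)
        have hcc : ∀ b, T'.counter (x ++ [b]) = T.counter (x ++ [b]) :=
          fun b => congrArg Prod.snd (hlc b)
        have hxl : ¬ T.IsLeaf x := by
          rintro ⟨_, h2⟩
          exact hnl ⟨hx, fun b hb => h2 b ((hmc b).mp hb)⟩
        rcases hRT.1 x hxd hxl with ⟨h1, h2, h3, h4⟩ | ⟨h1, h2, z, hz, he⟩
        · left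
          refine ⟨(hmc false).mpr h1, (hmc true).mpr h2, ?_, ?_⟩
          · rw [hsx, hsc false, hsc true]; exact h3
          · rw [hcx, hcc false, hcc true]; exact h4
        · right
          refine ⟨(hmc false).mpr h1, fun h => h2 ((hmc true).mp h), z, ?_, ?_⟩
          · rw [hsx, hsc false]; exact hz
          · rw [hcx, hcc false]; exact he
  · -- leaves are accepting
    intro x hlf
    obtain ⟨hx, hch⟩ := hlf
    by_cases hux : u <+: x
    · obtain ⟨t, rfl⟩ := hux
      have hy : u ++ (w ++ t) ∈ T.dom := (hA_mem t).mp hx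
      have hmc : ∀ b : Bool, ((u ++ t) ++ [b] ∈ T'.dom ↔ (u ++ (w ++ t)) ++ [b] ∈ T.dom) := by
        intro b
        have := hA_mem (t ++ [b])
        simpa only [List.append_assoc] using this
      have hlf' : T.IsLeaf (u ++ (w ++ t)) := ⟨hy, fun b hb => hch b ((hmc b).mpr hb)⟩
      have h := hRT.2 _ hlf'
      have hlx : T'.label (u ++ t) = T.label (u ++ (w ++ t)) := hA_lab t
      constructor
      · rw [show T'.state (u ++ t) = T.state (u ++ (w ++ t)) from congrArg Prod.fst hlx]
        exact h.1
      · rw [show T'.counter (u ++ t) = T.counter (u ++ (w ++ t)) from congrArg Prod.snd hlx]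
        exact h.2
    · by_cases hxu : x <+: u
      · exfalso
        have hne : x ≠ u := fun he => hux (by rw [he])
        obtain ⟨b0, hb0, _⟩ := toward x hxu hne
        exact hch b0 ((hmemB x hxu hne b0).mpr (T.prefixClosed hu hb0))
      · have hxd : x ∈ T.dom := (BTree.graft_dom_not hux).mp hx
        have hC := keyC x hux hxu
        have hlf' : T.IsLeaf x :=
          ⟨hxd, fun b hb => hch b ((BTree.graft_dom_not (hC b).1).mpr hb)⟩
        have h := hRT.2 _ hlf'
        have hlx : T'.label x = T.label x := BTree.graft_label_not hux hxu
        constructor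
        · rw [show T'.state x = T.state x from congrArg Prod.fst hlx]; exact h.1
        · rw [show T'.counter x = T.counter x from congrArg Prod.snd hlx]; exact h.2
  · -- strictly fewer nodes
    set φ : List Bool → List Bool :=
      fun x => if u <+: x then u ++ w ++ x.drop u.length else x with hφ
    have hinj : Set.InjOn φ T'.dom := by
      intro a ha b hb hab
      simp only [hφ] at hab
      by_cases h1 : u <+: a <;> by_cases h2 : u <+: b
      · rw [if_pos h1, if_pos h2] at hab
        obtain ⟨s, rfl⟩ := h1; obtain ⟨t, rfl⟩ := h2
        rw [List.drop_left, List.drop_left] at hab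
        rw [List.append_cancel_left hab]
      · rw [if_pos h1, if_neg h2] at hab
        exfalso
        apply h2
        rw [← hab]
        exact ⟨w ++ a.drop u.length, by simp⟩
      · rw [if_neg h1, if_pos h2] at hab
        exfalso
        apply h1
        rw [hab]
        exact ⟨w ++ b.drop u.length, by simp⟩
      · rw [if_neg h1, if_neg h2] at hab; exact hab
    have hsub : φ '' T'.dom ⊆ T.dom := by
      rintro _ ⟨x, hx, rfl⟩
      simp only [hφ]
      by_cases h1 : u <+: x
      · rw [if_pos h1]
        obtain ⟨t, rfl⟩ := h1
        have h2 := (hA_mem t).mp hx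
        rw [List.drop_left]
        rwa [← List.append_assoc] at h2
      · rw [if_neg h1]; exact (BTree.graft_dom_not h1).mp hx
    have hu_not : u ∉ φ '' T'.dom := by
      rintro ⟨x, hx, he⟩
      simp only [hφ] at he
      by_cases h1 : u <+: x
      · rw [if_pos h1] at he
        have := congrArg List.length he
        simp only [List.length_append] at this
        exact hw (List.length_eq_zero_iff.mp (by omega))
      · rw [if_neg h1] at he; exact h1 (he ▸ List.prefix_refl u)
    calc T'.dom.ncard = (φ '' T'.dom).ncard := (Set.ncard_image_of_injOn hinj).symm
      _ < T.dom.ncard := Set.ncard_lt_ncard ⟨hsub, fun hs => hu_not (hs hu)⟩ T.finite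
  · -- root label
    by_cases h0 : u = []
    · subst h0
      have h1 := hA_lab ([])
      simp only [List.nil_append, List.append_nil] at h1
      rw [h1]
      simp only [List.nil_append] at hst hct'
      have h2 : T.label w = (T.state w, T.counter w) := rfl
      rw [h2, ← hst, ← hct']
      rfl
    · have hux : ¬ u <+: ([] : List Bool) := fun h => h0 (List.prefix_nil.mp h)
      have hlx : T'.label [] = (T.state [], T.counter [] + δ) := hlabanc List.nil_prefix
      rw [hlx]; rfl

theorem step {B : BVASS1 Q} {T : BTree Q} (hRT : B.IsRT T) {x : List Bool}
    (hx : x ∈ T.dom) (hc : 1 ≤ T.counter x) :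
    ∃ b : Bool, x ++ [b] ∈ T.dom ∧ T.counter x ≤ 2 * T.counter (x ++ [b]) + 1 := by
  have hnl : ¬ T.IsLeaf x := fun h => by have := (hRT.2 x h).2; omega
  rcases hRT.1 x hx hnl with ⟨h1, h2, _, h4⟩ | ⟨h1, _, z, hz, he⟩
  · rcases le_total (T.counter (x ++ [false])) (T.counter (x ++ [true])) with h | h
    · exact ⟨true, h2, by omega⟩
    · exact ⟨false, h1, by omega⟩
  · refine ⟨false, h1, ?_⟩
    rcases B.un_small _ _ _ hz with rfl | rfl | rfl <;> omega

theorem path {B : BVASS1 Q} {T : BTree Q} (hRT : B.IsRT T) (K : ℕ)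
    (hK : 2 ^ K < T.counter []) :
    ∀ k, k ≤ K → ∃ x ∈ T.dom, x.length = k ∧
      T.counter [] + 2 ≤ 2 ^ k * (T.counter x + 2) := by
  intro k
  induction k with
  | zero => intro _; exact ⟨[], T.root_mem, rfl, by simp⟩
  | succ k ih =>
    intro hk
    obtain ⟨x, hx, hlen, hbd⟩ := ih (by omega)
    have hx1 : 1 ≤ T.counter x := by
      by_contra h
      have h0 : T.counter x = 0 := by omega
      rw [h0] at hbd
      have h2 : 2 ^ (k + 1) ≤ 2 ^ K := Nat.pow_le_pow_right (by norm_num) hk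
      have h3 : 2 ^ k * 2 = 2 ^ (k + 1) := by ring
      omega
    obtain ⟨b, hb, hbb⟩ := step hRT hx hx1
    refine ⟨x ++ [b], hb, by simp [hlen], ?_⟩
    have h1 : 2 ^ (k + 1) * (T.counter (x ++ [b]) + 2)
        = 2 ^ k * (2 * T.counter (x ++ [b]) + 4) := by ring
    have h3 : 2 ^ k * (T.counter x + 2) ≤ 2 ^ k * (2 * T.counter (x ++ [b]) + 4) :=
      Nat.mul_le_mul_left _ (by omega)
    omega


end BVASS1

/-- If `q(n)` is reachable with `n > 2^|Q|`, then some reachability tree for `q(n')`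
with `n' ≥ n` contains a decreasing node of depth at most `|Q|`. -/
theorem stmt5 {Q : Type} [Fintype Q] (B : BVASS1 Q) (q : Q) (n : ℕ)
    (hreach : B.Reachable q n) (hn : 2 ^ Fintype.card Q < n) :
    ∃ n', n ≤ n' ∧ ∃ T : BTree Q, B.IsRT T ∧ T.label [] = (q, n') ∧
      ∃ v ∈ T.dom, v.length ≤ Fintype.card Q ∧
        ∃ u ∈ T.dom, StrictPrefix u v ∧ T.state u = T.state v ∧
          T.counter v < T.counter u := by
  classical
  obtain ⟨T0, hT0, hl0⟩ := hreach
  suffices H : ∀ N (T : BTree Q) (m : ℕ), T.dom.ncard ≤ N → B.IsRT T →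
      T.label [] = (q, m) → n ≤ m →
      ∃ n', n ≤ n' ∧ ∃ T : BTree Q, B.IsRT T ∧ T.label [] = (q, n') ∧
        ∃ v ∈ T.dom, v.length ≤ Fintype.card Q ∧
          ∃ u ∈ T.dom, StrictPrefix u v ∧ T.state u = T.state v ∧
            T.counter v < T.counter u by
    exact H T0.dom.ncard T0 n le_rfl hT0 hl0 le_rfl
  intro N
  induction N with
  | zero =>
    intro T m hcard _ _ _
    have hpos : 0 < T.dom.ncard := (Set.ncard_pos T.finite).mpr ⟨[], T.root_mem⟩
    omega
  | succ N ih =>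
    intro T m hcard hRT hlab hnm
    have hcroot : T.counter [] = m := by simp [BTree.counter, hlab]
    have hmK : 2 ^ Fintype.card Q < m := lt_of_lt_of_le hn hnm
    obtain ⟨x, hx, hxlen, -⟩ :=
      BVASS1.path hRT (Fintype.card Q) (by omega) (Fintype.card Q) le_rfl
    obtain ⟨i0, j0, hij, hfij⟩ := Fintype.exists_ne_map_eq_of_card_lt
      (fun i : Fin (Fintype.card Q + 1) => T.state (x.take (i : ℕ))) (by simp)
    obtain ⟨i, j, hlt, hfeq⟩ : ∃ i j : Fin (Fintype.card Q + 1), (i : ℕ) < (j : ℕ) ∧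
        T.state (x.take (i : ℕ)) = T.state (x.take (j : ℕ)) := by
      rcases lt_or_gt_of_ne hij with h | h
      · exact ⟨i0, j0, h, hfij⟩
      · exact ⟨j0, i0, h, hfij.symm⟩
    set uN := x.take (i : ℕ) with huN
    set vN := x.take (j : ℕ) with hvN
    have hjK : (j : ℕ) ≤ Fintype.card Q := by omega
    have hulen : uN.length = (i : ℕ) := by
      rw [huN, List.length_take, hxlen]; omega
    have hvlen : vN.length = (j : ℕ) := by
      rw [hvN, List.length_take, hxlen]; omega
    have hpre : uN <+: vN := by
      have heq : uN = vN.take (i : ℕ) := by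
        rw [huN, hvN, List.take_take, min_eq_left (le_of_lt hlt)]
      rw [heq]; exact List.take_prefix _ _
    have hne : uN ≠ vN := by
      intro h
      rw [h, hvlen] at hulen
      omega
    have hvdom : vN ∈ T.dom := T.prefixClosed hx (List.take_prefix _ _)
    have hudom : uN ∈ T.dom := T.prefixClosed hx (List.take_prefix _ _)
    by_cases hdec : T.counter vN < T.counter uN
    · exact ⟨m, hnm, T, hRT, hlab, vN, hvdom, by rw [hvlen]; exact hjK,
        uN, hudom, ⟨hpre, hne⟩, hfeq, hdec⟩
    · push_neg at hdec
      obtain ⟨t, ht⟩ := hpre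
      have htne : t ≠ [] := fun h => hne (by rw [← ht, h, List.append_nil])
      have hvd : uN ++ t ∈ T.dom := by rw [ht]; exact hvdom
      have hst' : T.state uN = T.state (uN ++ t) := by rw [ht]; exact hfeq
      have hct'' : T.counter uN ≤ T.counter (uN ++ t) := by rw [ht]; exact hdec
      obtain ⟨T', hRT', hlt', hlab'⟩ := BVASS1.collapse hRT htne hudom hvd hst' hct''
      have hlab'' : T'.label [] = (q, m + (T.counter (uN ++ t) - T.counter uN)) := by
        rw [hlab', hlab]
      exact ih T' (m + (T.counter (uN ++ t) - T.counter uN)) (by omega) hRT' hlab''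
        (by omega)
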